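/- For all closed BCCSP processes p, q: if p ⊑_CS q then the equation p = p + q is equationally derivable from the axiom set A_CS^≡. -/
import Mathlib


inductive Proc (A : Type) : Type
  | nil : Proc A
  | pre : A → Proc A → Proc A
  | add : Proc A → Proc A → Proc A

inductive Step {A : Type} : Proc A → A → Proc A → Prop
  | pre (a : A) (p : Proc A) : Step (.pre a p) a p
  | addL {p : Proc A} {a : A} {p' : Proc A} (q : Proc A) :
      Step p a p' → Step (.add p q) a p'
  | addR {q : Proc A} {a : A} {q' : Proc A} (p : Proc A) :
      Step q a q' → Step (.add p q) a q'

/-- `initials p` is the set `I(p)` of actions that `p` can immediately perform. -/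
def initials {A : Type} (p : Proc A) : Set A := {a | ∃ p', Step p a p'}

/-- `{Ar, Al, Abi}` is a partition of the action set `A` (cells may be empty). -/
def IsPartition {A : Type} (Ar Al Abi : Set A) : Prop :=
  (Ar ∪ Al ∪ Abi = Set.univ) ∧ Disjoint Ar Al ∧ Disjoint Ar Abi ∧ Disjoint Al Abi

/-- Covariant-contravariant simulation w.r.t. covariant actions `Ar`,
contravariant actions `Al` and bivariant actions `Abi`. -/
def IsCCSim {A : Type} (Ar Al Abi : Set A) (S : Proc A → Proc A → Prop) : Prop :=
  ∀ p q, S p q →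
    (∀ a ∈ Ar ∪ Abi, ∀ p', Step p a p' → ∃ q', Step q a q' ∧ S p' q') ∧
    (∀ a ∈ Al ∪ Abi, ∀ q', Step q a q' → ∃ p', Step p a p' ∧ S p' q')

/-- The covariant-contravariant simulation preorder `p ≲_CC q`. -/
def ccLe {A : Type} (Ar Al Abi : Set A) (p q : Proc A) : Prop :=
  ∃ S, IsCCSim Ar Al Abi S ∧ S p q

/-- Covariant-contravariant simulation equivalence `p ≡_CC q`. -/
def ccEq {A : Type} (Ar Al Abi : Set A) (p q : Proc A) : Prop :=
  ccLe Ar Al Abi p q ∧ ccLe Ar Al Abi q p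

/-- Conformance simulation. -/
def IsConfSim {A : Type} (R : Proc A → Proc A → Prop) : Prop :=
  ∀ p q, R p q →
    initials p ⊆ initials q ∧
    (∀ a q', Step q a q' → a ∈ initials p → ∃ p', Step p a p' ∧ R p' q')

/-- The conformance simulation preorder `p ≲_CS q`. -/
def csLe {A : Type} (p q : Proc A) : Prop := ∃ R, IsConfSim R ∧ R p q

/-- Conformance simulation equivalence `p ≡_CS q`. -/
def csEq {A : Type} (p q : Proc A) : Prop := csLe p q ∧ csLe q p

/-- The conformance precongruence `p ⊑_CS q`. -/
def csPre {A : Type} (p q : Proc A) : Prop := csLe p q ∧ initials q ⊆ initials p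

/-- Plain simulation. -/
def IsSim {A : Type} (S : Proc A → Proc A → Prop) : Prop :=
  ∀ p q, S p q → ∀ a p', Step p a p' → ∃ q', Step q a q' ∧ S p' q'

/-- The plain simulation preorder `p ≲_S q`. -/
def simLe {A : Type} (p q : Proc A) : Prop := ∃ S, IsSim S ∧ S p q

/-- Ready simulation. -/
def IsRSim {A : Type} (S : Proc A → Proc A → Prop) : Prop :=
  ∀ p q, S p q → initials p = initials q ∧
    (∀ a p', Step p a p' → ∃ q', Step q a q' ∧ S p' q')

/-- The ready simulation preorder `p ≲_RS q`. -/
def rsLe {A : Type} (p q : Proc A) : Prop := ∃ S, IsRSim S ∧ S p q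

/-- Ready conformance simulation: a conformance simulation that additionally
guarantees `I(q) ⊆ I(p)` for all related pairs. -/
def IsRCSim {A : Type} (R : Proc A → Proc A → Prop) : Prop :=
  IsConfSim R ∧ ∀ p q, R p q → initials q ⊆ initials p

/-- The ready conformance simulation preorder `p ≲_RCS q`. -/
def rcsLe {A : Type} (p q : Proc A) : Prop := ∃ R, IsRCSim R ∧ R p q

/-- Open BCCSP terms (with variables indexed by `ℕ`). -/
inductive Term (A : Type) : Type
  | var : ℕ → Term A
  | nil : Term A
  | pre : A → Term A → Term A
  | add : Term A → Term A → Term A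

/-- Closed substitution applied to an open term. -/
def Term.subst {A : Type} (σ : ℕ → Proc A) : Term A → Proc A
  | .var n => σ n
  | .nil => .nil
  | .pre a t => .pre a (t.subst σ)
  | .add s t => .add (s.subst σ) (t.subst σ)

/-- View a closed process as an (open) term. -/
def Proc.toTerm {A : Type} : Proc A → Term A
  | .nil => .nil
  | .pre a p => .pre a p.toTerm
  | .add p q => .add p.toTerm q.toTerm

/-- Inequational derivability (between closed processes) from a set `E` of
inequations between open terms: the least relation containing all substitution
instances of `E` and closed under reflexivity, transitivity and the congruence
rules for prefixing and `+`. -/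
inductive DerivLe {A : Type} (E : Set (Term A × Term A)) : Proc A → Proc A → Prop
  | ax (l r : Term A) (σ : ℕ → Proc A) : (l, r) ∈ E → DerivLe E (l.subst σ) (r.subst σ)
  | refl (p : Proc A) : DerivLe E p p
  | trans {p q r : Proc A} : DerivLe E p q → DerivLe E q r → DerivLe E p r
  | pre (a : A) {p q : Proc A} : DerivLe E p q → DerivLe E (.pre a p) (.pre a q)
  | add {p q r s : Proc A} : DerivLe E p q → DerivLe E r s → DerivLe E (.add p r) (.add q s)

/-- Equational derivability (between closed processes) from a set `E` of
equations between open terms. -/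
inductive DerivEq {A : Type} (E : Set (Term A × Term A)) : Proc A → Proc A → Prop
  | ax (l r : Term A) (σ : ℕ → Proc A) : (l, r) ∈ E → DerivEq E (l.subst σ) (r.subst σ)
  | refl (p : Proc A) : DerivEq E p p
  | symm {p q : Proc A} : DerivEq E p q → DerivEq E q p
  | trans {p q r : Proc A} : DerivEq E p q → DerivEq E q r → DerivEq E p r
  | pre (a : A) {p q : Proc A} : DerivEq E p q → DerivEq E (.pre a p) (.pre a q)
  | add {p q r s : Proc A} : DerivEq E p q → DerivEq E r s → DerivEq E (.add p r) (.add q s)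

/-- Substitution of (possibly open) terms for variables. -/
def Term.substT {A : Type} (σ : ℕ → Term A) : Term A → Term A
  | .var n => σ n
  | .nil => .nil
  | .pre a t => .pre a (t.substT σ)
  | .add s t => .add (s.substT σ) (t.substT σ)

/-- Equational derivability between open terms from a set `E` of equations. -/
inductive TDerivEq {A : Type} (E : Set (Term A × Term A)) : Term A → Term A → Prop
  | ax (l r : Term A) (σ : ℕ → Term A) : (l, r) ∈ E → TDerivEq E (l.substT σ) (r.substT σ)
  | refl (t : Term A) : TDerivEq E t t
  | symm {s t : Term A} : TDerivEq E s t → TDerivEq E t s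
  | trans {s t u : Term A} : TDerivEq E s t → TDerivEq E t u → TDerivEq E s u
  | pre (a : A) {s t : Term A} : TDerivEq E s t → TDerivEq E (.pre a s) (.pre a t)
  | add {s t u v : Term A} : TDerivEq E s t → TDerivEq E u v → TDerivEq E (.add s u) (.add t v)

/-- The bisimulation axioms B1–B4, as equations. -/
def BEqns (A : Type) : Set (Term A × Term A) :=
  { (.add (.var 0) (.var 1), .add (.var 1) (.var 0)),
    (.add (.add (.var 0) (.var 1)) (.var 2), .add (.var 0) (.add (.var 1) (.var 2))),
    (.add (.var 0) (.var 0), .var 0),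
    (.add (.var 0) .nil, .var 0) }

/-- The bisimulation axioms B1–B4, each used as two inequations. -/
def BIneqs (A : Type) : Set (Term A × Term A) := BEqns A ∪ Prod.swap '' BEqns A

/-- The axiom set `A_CS^≡`: B1–B4 together with all closed instances
`a.p = a.p + a.(p + q)` with `I(p) ∩ I(q) = ∅` and all closed instances
`a.(p + q) = a.(p + q) + a.p` with `I(q) ⊆ I(p)`. -/
def ACSEqns (A : Type) : Set (Term A × Term A) :=
  BEqns A ∪
  { e | ∃ (a : A) (p q : Proc A), initials p ∩ initials q = ∅ ∧
        e = ((Proc.pre a p).toTerm,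
             (Proc.add (.pre a p) (.pre a (.add p q))).toTerm) } ∪
  { e | ∃ (a : A) (p q : Proc A), initials q ⊆ initials p ∧
        e = ((Proc.pre a (.add p q)).toTerm,
             (Proc.add (.pre a (.add p q)) (.pre a p)).toTerm) }

/- ---------------- Auxiliary development ---------------- -/

open scoped Classical

namespace CSAux

variable {A : Type}

instance {E : Set (Term A × Term A)} :
    Trans (DerivEq E) (DerivEq E) (DerivEq E) := ⟨DerivEq.trans⟩

/-- Size of a process. -/
def psize : Proc A → ℕ
  | .nil => 1
  | .pre _ p => psize p + 1
  | .add p q => psize p + psize q + 1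

lemma psize_pos (p : Proc A) : 1 ≤ psize p := by
  cases p <;> simp [psize]

lemma step_psize {p : Proc A} {a : A} {p' : Proc A} (h : Step p a p') :
    psize p' < psize p := by
  induction h with
  | pre a p => simp [psize]
  | addL q _ ih => simp [psize]; omega
  | addR p _ ih => simp [psize]; omega

lemma toTerm_subst (σ : ℕ → Proc A) (p : Proc A) :
    (Proc.toTerm p).subst σ = p := by
  induction p with
  | nil => rfl
  | pre a p ih => simp [Proc.toTerm, Term.subst, ih]
  | add p q ih1 ih2 => simp [Proc.toTerm, Term.subst, ih1, ih2]

lemma mem_initials {p : Proc A} {a : A} : a ∈ initials p ↔ ∃ p', Step p a p' :=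
  Iff.rfl

lemma initials_nil : initials (Proc.nil : Proc A) = ∅ := by
  ext a; simp only [mem_initials, Set.mem_empty_iff_false, iff_false]
  rintro ⟨p', h⟩; cases h

lemma initials_pre (a : A) (p : Proc A) : initials (Proc.pre a p) = {a} := by
  ext b; simp only [mem_initials, Set.mem_singleton_iff]
  constructor
  · rintro ⟨p', h⟩; cases h; rfl
  · rintro rfl; exact ⟨p, Step.pre _ p⟩

lemma initials_add (p q : Proc A) :
    initials (Proc.add p q) = initials p ∪ initials q := by
  ext a
  simp only [mem_initials, Set.mem_union]
  constructor
  · rintro ⟨r, h⟩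
    cases h with
    | addL q h => exact Or.inl ⟨_, h⟩
    | addR p h => exact Or.inr ⟨_, h⟩
  · rintro (⟨r, h⟩ | ⟨r, h⟩)
    · exact ⟨r, Step.addL _ h⟩
    · exact ⟨r, Step.addR _ h⟩

/-- Restriction of a process to summands with initial action in `S`. -/
noncomputable def restrict (S : Set A) : Proc A → Proc A
  | .nil => .nil
  | .pre a p => if a ∈ S then .pre a p else .nil
  | .add p q => .add (restrict S p) (restrict S q)

lemma step_restrict {S : Set A} {q : Proc A} {a : A} {q' : Proc A} :
    Step (restrict S q) a q' ↔ a ∈ S ∧ Step q a q' := by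
  induction q with
  | nil =>
    simp only [restrict]
    constructor
    · intro h; cases h
    · rintro ⟨_, h⟩; cases h
  | pre b p ih =>
    simp only [restrict]
    by_cases hb : b ∈ S
    · simp only [if_pos hb]
      constructor
      · intro h; cases h; exact ⟨hb, Step.pre _ _⟩
      · rintro ⟨ha, h⟩; cases h; exact Step.pre _ _
    · simp only [if_neg hb]
      constructor
      · intro h; cases h
      · rintro ⟨ha, h⟩; cases h; exact absurd ha hb
  | add r s ih1 ih2 =>
    simp only [restrict]
    constructor
    · intro h
      cases h with
      | addL _ h => obtain ⟨ha, h⟩ := ih1.1 h; exact ⟨ha, Step.addL _ h⟩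
      | addR _ h => obtain ⟨ha, h⟩ := ih2.1 h; exact ⟨ha, Step.addR _ h⟩
    · rintro ⟨ha, h⟩
      cases h with
      | addL _ h => exact Step.addL _ (ih1.2 ⟨ha, h⟩)
      | addR _ h => exact Step.addR _ (ih2.2 ⟨ha, h⟩)

lemma initials_restrict (S : Set A) (q : Proc A) :
    initials (restrict S q) = S ∩ initials q := by
  ext a
  simp only [mem_initials, Set.mem_inter_iff]
  constructor
  · rintro ⟨q', h⟩; obtain ⟨ha, h⟩ := step_restrict.1 h; exact ⟨ha, q', h⟩
  · rintro ⟨ha, q', h⟩; exact ⟨q', step_restrict.2 ⟨ha, h⟩⟩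

lemma psize_restrict_le (S : Set A) (q : Proc A) :
    psize (restrict S q) ≤ psize q := by
  induction q with
  | nil => simp [restrict]
  | pre a p ih =>
    simp only [restrict]
    by_cases hb : a ∈ S
    · simp [if_pos hb]
    · simp only [if_neg hb, psize]; have := psize_pos p; omega
  | add r s ih1 ih2 => simp only [restrict, psize]; omega

/- ---------------- Derivability lemmas ---------------- -/

local notation "D" => DerivEq (ACSEqns A)

local notation:50 a:51 " ≋ " b:51 => DerivEq (ACSEqns _) a b

lemma dComm (p q : Proc A) : D (.add p q) (.add q p) := by
  have h := DerivEq.ax (E := ACSEqns A) (.add (.var 0) (.var 1)) (.add (.var 1) (.var 0))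
      (fun n => if n = 0 then p else q) (Or.inl (Or.inl (by simp [BEqns])))
  simpa [Term.subst] using h

lemma dAssoc (p q r : Proc A) :
    D (.add (.add p q) r) (.add p (.add q r)) := by
  have h := DerivEq.ax (E := ACSEqns A)
      (.add (.add (.var 0) (.var 1)) (.var 2)) (.add (.var 0) (.add (.var 1) (.var 2)))
      (fun n => if n = 0 then p else if n = 1 then q else r)
      (Or.inl (Or.inl (by simp [BEqns])))
  simpa [Term.subst] using h

lemma dIdem (p : Proc A) : D (.add p p) p := by
  have h := DerivEq.ax (E := ACSEqns A) (.add (.var 0) (.var 0)) (.var 0)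
      (fun _ => p) (Or.inl (Or.inl (by simp [BEqns])))
  simpa [Term.subst] using h

lemma dNilR (p : Proc A) : D (.add p .nil) p := by
  have h := DerivEq.ax (E := ACSEqns A) (.add (.var 0) .nil) (.var 0)
      (fun _ => p) (Or.inl (Or.inl (by simp [BEqns])))
  simpa [Term.subst] using h

lemma dCS1 {p q : Proc A} (a : A) (h : initials p ∩ initials q = ∅) :
    D (.pre a p) (.add (.pre a p) (.pre a (.add p q))) := by
  have hax := DerivEq.ax (E := ACSEqns A)
      (Proc.pre a p).toTerm
      (Proc.add (.pre a p) (.pre a (.add p q))).toTerm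
      (fun _ => Proc.nil)
      (Or.inl (Or.inr ⟨a, p, q, h, rfl⟩))
  simpa [toTerm_subst] using hax

lemma dCS2 {p q : Proc A} (a : A) (h : initials q ⊆ initials p) :
    D (.pre a (.add p q)) (.add (.pre a (.add p q)) (.pre a p)) := by
  have hax := DerivEq.ax (E := ACSEqns A)
      (Proc.pre a (.add p q)).toTerm
      (Proc.add (.pre a (.add p q)) (.pre a p)).toTerm
      (fun _ => Proc.nil)
      (Or.inr ⟨a, p, q, h, rfl⟩)
  simpa [toTerm_subst] using hax

/-- Summand absorption: if `p --a--> p'` then `p = p + a.p'`. -/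
lemma dAbsorb {p : Proc A} {a : A} {p' : Proc A} (h : Step p a p') :
    D p (.add p (.pre a p')) := by
  induction h with
  | pre a p => exact DerivEq.symm (dIdem _)
  | @addL r b r' s h ih =>
    calc (Proc.add r s) ≋ (.add (.add r (.pre b r')) s) :=
          DerivEq.add ih (DerivEq.refl s)
      _ ≋ Proc.add r (.add (.pre b r') s) := dAssoc _ _ _
      _ ≋ Proc.add r (.add s (.pre b r')) := DerivEq.add (DerivEq.refl r) (dComm _ _)
      _ ≋ Proc.add (.add r s) (.pre b r') := DerivEq.symm (dAssoc _ _ _)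
  | @addR s b s' r h ih =>
    calc (Proc.add r s) ≋ (.add r (.add s (.pre b s'))) :=
          DerivEq.add (DerivEq.refl r) ih
      _ ≋ Proc.add (.add r s) (.pre b s') := DerivEq.symm (dAssoc _ _ _)

/-- If every summand of `q` is absorbed by `p`, then `q` is. -/
lemma dSummands {p : Proc A} (q : Proc A)
    (h : ∀ a q', Step q a q' → D p (.add p (.pre a q'))) :
    D p (.add p q) := by
  induction q with
  | nil => exact DerivEq.symm (dNilR p)
  | pre a r ih => exact h a r (Step.pre a r)
  | add r s ih1 ih2 =>
    have h1 : D p (.add p r) := ih1 fun a q' hs => h a q' (Step.addL _ hs)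
    have h2 : D p (.add p s) := ih2 fun a q' hs => h a q' (Step.addR _ hs)
    calc p ≋ (.add p s) := h2
      _ ≋ Proc.add (.add p r) s := DerivEq.add h1 (DerivEq.refl s)
      _ ≋ Proc.add p (.add r s) := dAssoc _ _ _

/-- Splitting `q` along a set of actions. -/
lemma dSplit (S : Set A) (q : Proc A) :
    D q (.add (restrict S q) (restrict Sᶜ q)) := by
  induction q with
  | nil => exact DerivEq.symm (dNilR _)
  | pre a r ih =>
    by_cases hb : a ∈ S
    · have hb' : a ∉ Sᶜ := by simp [hb]
      simp only [restrict, if_pos hb, if_neg hb']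
      exact DerivEq.symm (dNilR _)
    · have hb' : a ∈ Sᶜ := hb
      simp only [restrict, if_neg hb, if_pos hb']
      exact DerivEq.trans (DerivEq.symm (dNilR _)) (dComm _ _)
  | add r s ih1 ih2 =>
    simp only [restrict]
    calc (Proc.add r s) ≋
          (.add (.add (restrict S r) (restrict Sᶜ r)) (.add (restrict S s) (restrict Sᶜ s))) :=
          DerivEq.add ih1 ih2
      _ ≋ Proc.add (restrict S r) (.add (restrict Sᶜ r) (.add (restrict S s) (restrict Sᶜ s))) :=
          dAssoc _ _ _
      _ ≋ Proc.add (restrict S r) (.add (.add (restrict Sᶜ r) (restrict S s)) (restrict Sᶜ s)) :=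
          DerivEq.add (DerivEq.refl _) (DerivEq.symm (dAssoc _ _ _))
      _ ≋ Proc.add (restrict S r) (.add (.add (restrict S s) (restrict Sᶜ r)) (restrict Sᶜ s)) :=
          DerivEq.add (DerivEq.refl _) (DerivEq.add (dComm _ _) (DerivEq.refl _))
      _ ≋ Proc.add (restrict S r) (.add (restrict S s) (.add (restrict Sᶜ r) (restrict Sᶜ s))) :=
          DerivEq.add (DerivEq.refl _) (dAssoc _ _ _)
      _ ≋ Proc.add (.add (restrict S r) (restrict S s)) (.add (restrict Sᶜ r) (restrict Sᶜ s)) :=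
          DerivEq.symm (dAssoc _ _ _)

/- ---------------- Semantic lemmas ---------------- -/

lemma csLe_initials {p q : Proc A} (h : csLe p q) : initials p ⊆ initials q := by
  obtain ⟨R, hR, hpq⟩ := h
  exact (hR p q hpq).1

lemma csLe_step {p q : Proc A} (h : csLe p q) {a : A} {q' : Proc A}
    (hs : Step q a q') (ha : a ∈ initials p) :
    ∃ p', Step p a p' ∧ csLe p' q' := by
  obtain ⟨R, hR, hpq⟩ := h
  obtain ⟨p', hp, hR'⟩ := (hR p q hpq).2 a q' hs ha
  exact ⟨p', hp, R, hR, hR'⟩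

lemma csPre_restrict {p q : Proc A} (h : csLe p q) :
    csPre p (restrict (initials p) q) := by
  obtain ⟨R, hR, hpq⟩ := h
  have hsub : initials p ⊆ initials q := (hR p q hpq).1
  have hinit : initials (restrict (initials p) q) = initials p := by
    rw [initials_restrict]
    exact Set.inter_eq_left.2 hsub
  refine ⟨⟨fun x y => R x y ∨ (x = p ∧ y = restrict (initials p) q), ?_, Or.inr ⟨rfl, rfl⟩⟩,
      hinit.le⟩
  rintro x y (hxy | ⟨rfl, rfl⟩)
  · refine ⟨(hR x y hxy).1, ?_⟩
    intro a y' hs ha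
    obtain ⟨x', hx, hR'⟩ := (hR x y hxy).2 a y' hs ha
    exact ⟨x', hx, Or.inl hR'⟩
  · refine ⟨hinit.ge, ?_⟩
    intro a y' hs ha
    obtain ⟨ha', hs'⟩ := step_restrict.1 hs
    obtain ⟨x', hx, hR'⟩ := (hR _ _ hpq).2 a y' hs' ha
    exact ⟨x', hx, Or.inl hR'⟩

/- ---------------- The main induction ---------------- -/

lemma main : ∀ n : ℕ, ∀ p q : Proc A, psize p + psize q ≤ n →
    (csPre p q → D p (.add p q)) ∧
    (csLe p q → ∀ a : A, D (.pre a p) (.add (.pre a p) (.pre a q))) := by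
  intro n
  induction n with
  | zero =>
    intro p q hn
    have := psize_pos p; have := psize_pos q
    omega
  | succ n ih =>
    -- Part T at level n+1, using part L of the IH.
    have T : ∀ p q : Proc A, psize p + psize q ≤ n + 1 → csPre p q →
        D p (.add p q) := by
      rintro p q hn ⟨hle, hIq⟩
      apply dSummands
      intro a q' hstep
      have ha : a ∈ initials p := hIq ⟨q', hstep⟩
      obtain ⟨p', hp, hle'⟩ := csLe_step hle hstep ha
      have hsz : psize p' + psize q' ≤ n := by
        have h1 := step_psize hp; have h2 := step_psize hstep; omega
      have hL : D (.pre a p') (.add (.pre a p') (.pre a q')) :=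
        (ih p' q' hsz).2 hle' a
      calc p ≋ (.add p (.pre a p')) := dAbsorb hp
        _ ≋ Proc.add p (.add (.pre a p') (.pre a q')) :=
            DerivEq.add (DerivEq.refl p) hL
        _ ≋ Proc.add (.add p (.pre a p')) (.pre a q') := DerivEq.symm (dAssoc _ _ _)
        _ ≋ Proc.add p (.pre a q') :=
            DerivEq.add (DerivEq.symm (dAbsorb hp)) (DerivEq.refl _)
    intro p q hn
    refine ⟨T p q hn, ?_⟩
    intro hle a
    set S := initials p with hS
    set q1 := restrict S q with hq1
    set q2 := restrict Sᶜ q with hq2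
    have hpre : csPre p q1 := csPre_restrict hle
    have h1 : D p (.add p q1) :=
      T p q1 (le_trans (by rw [hq1]; have := psize_restrict_le S q; omega) hn) hpre
    have hsplit : D q (.add q1 q2) := dSplit S q
    have hpq2 : D (.add p q2) (.add p q) := by
      calc (Proc.add p q2) ≋ (.add (.add p q1) q2) :=
            DerivEq.add h1 (DerivEq.refl q2)
        _ ≋ Proc.add p (.add q1 q2) := dAssoc _ _ _
        _ ≋ Proc.add p q := DerivEq.add (DerivEq.refl p) (DerivEq.symm hsplit)
    have hdisj : initials p ∩ initials q2 = ∅ := by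
      rw [hq2, initials_restrict]
      ext x
      simp only [Set.mem_inter_iff, Set.mem_compl_iff, Set.mem_empty_iff_false, iff_false]
      rintro ⟨hx, hx', _⟩; exact hx' hx
    have hsub : initials p ⊆ initials q := csLe_initials hle
    have ax1 : D (.pre a p) (.add (.pre a p) (.pre a (.add p q2))) := dCS1 a hdisj
    have ax2 : D (.pre a (.add q p)) (.add (.pre a (.add q p)) (.pre a q)) :=
      dCS2 a hsub
    -- a.p = a.p + a.(p+q2) = a.p + a.(q+p)
    have key : D (.pre a p) (.add (.pre a p) (.pre a (.add q p))) := by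
      calc (Proc.pre a p) ≋ (.add (.pre a p) (.pre a (.add p q2))) := ax1
        _ ≋ Proc.add (.pre a p) (.pre a (.add p q)) :=
            DerivEq.add (DerivEq.refl _) (DerivEq.pre a hpq2)
        _ ≋ Proc.add (.pre a p) (.pre a (.add q p)) :=
            DerivEq.add (DerivEq.refl _) (DerivEq.pre a (dComm p q))
    calc (Proc.pre a p) ≋ (.add (.pre a p) (.pre a (.add q p))) := key
      _ ≋ Proc.add (.pre a p) (.add (.pre a (.add q p)) (.pre a q)) :=
          DerivEq.add (DerivEq.refl _) ax2
      _ ≋ Proc.add (.add (.pre a p) (.pre a (.add q p))) (.pre a q) :=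
          DerivEq.symm (dAssoc _ _ _)
      _ ≋ Proc.add (.pre a p) (.pre a q) :=
          DerivEq.add (DerivEq.symm key) (DerivEq.refl _)

end CSAux

/-- If `p ⊑_CS q` then `p = p + q` is derivable from `A_CS^≡`. -/
theorem csPre_implies_derivable {A : Type} (p q : Proc A) (h : csPre p q) :
    DerivEq (ACSEqns A) p (.add p q) :=
  (CSAux.main (CSAux.psize p + CSAux.psize q) p q le_rfl).1 h
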